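/- With the same hypotheses (∇ψ(q)·f(q) < 0), the matrix D = -[ (f·f)/(∇ψ·f) E + (∇ψ×f)²/((∇ψ·f)(∇ψ·∇ψ)) ] is positive semidefinite. -/

import Mathlib

open Matrix Filter Topology

/-- Matrix-valued cross product: `(x×y)ᵢⱼ = xᵢyⱼ - xⱼyᵢ`. -/
def cross {ι : Type*} (x y : ι → ℝ) : Matrix ι ι ℝ :=
  Matrix.of fun i j => x i * y j - x j * y i

lemma cross_mulVec {n : ℕ} (g f x : Fin n → ℝ) :
    (cross g f) *ᵥ x = (f ⬝ᵥ x) • g - (g ⬝ᵥ x) • f := by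
  funext i
  simp only [cross, Matrix.mulVec, dotProduct, Matrix.of_apply, Pi.sub_apply,
    Pi.smul_apply, smul_eq_mul, sub_mul, Finset.sum_sub_distrib]
  congr 1 <;> rw [Finset.sum_mul] <;> exact Finset.sum_congr rfl fun j _ => by ring

lemma cs {n : ℕ} (x y : Fin n → ℝ) : (x ⬝ᵥ y) ^ 2 ≤ (x ⬝ᵥ x) * (y ⬝ᵥ y) := by
  simpa [dotProduct, sq] using
    Finset.sum_mul_sq_le_sq_mul_sq Finset.univ x y

theorem stmt7 {n : ℕ} (g f : Fin n → ℝ) (hg : g ≠ 0) (hf : f ≠ 0) (hgf : g ⬝ᵥ f < 0) :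
    (-(((f ⬝ᵥ f) / (g ⬝ᵥ f)) • (1 : Matrix (Fin n) (Fin n) ℝ) +
        ((g ⬝ᵥ f) * (g ⬝ᵥ g))⁻¹ • (cross g f) ^ 2)).PosSemidef := by
  set a := f ⬝ᵥ f with ha
  set b := g ⬝ᵥ g with hb
  set c := g ⬝ᵥ f with hc
  have hb0 : 0 < b := by
    have h2 : 0 ≤ b := Finset.sum_nonneg fun i _ => mul_self_nonneg _
    rcases h2.lt_or_eq with h | h
    · exact h
    · exact absurd (dotProduct_self_eq_zero.mp h.symm) hg
  have hc0 : c < 0 := hgf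
  have hfg : f ⬝ᵥ g = c := dotProduct_comm f g
  rw [Matrix.posSemidef_iff_dotProduct_mulVec]
  constructor
  · -- Hermitian
    have hAH : (cross g f)ᴴ = -(cross g f) := by
      ext i j
      simp [cross, Matrix.conjTranspose_apply]
    have h2 : ((cross g f) ^ 2).IsHermitian := by
      rw [Matrix.IsHermitian, sq, Matrix.conjTranspose_mul, hAH, neg_mul_neg]
    have h1 : ((a / c) • (1 : Matrix (Fin n) (Fin n) ℝ)).IsHermitian := by
      rw [Matrix.IsHermitian, Matrix.conjTranspose_smul, Matrix.conjTranspose_one]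
      norm_num
    have h3 : (((c * b)⁻¹) • ((cross g f) ^ 2)).IsHermitian := by
      rw [Matrix.IsHermitian, Matrix.conjTranspose_smul, h2]
      norm_num
    exact (h1.add h3).neg
  · intro x
    set u := g ⬝ᵥ x with hu
    set v := f ⬝ᵥ x with hv
    set s := x ⬝ᵥ x with hs
    have hQ : x ⬝ᵥ ((cross g f) ^ 2 *ᵥ x) = 2 * c * u * v - a * u ^ 2 - b * v ^ 2 := by
      rw [sq, ← Matrix.mulVec_mulVec, cross_mulVec, cross_mulVec]
      simp only [dotProduct_sub, dotProduct_smul, smul_eq_mul,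
        dotProduct_comm x g, dotProduct_comm x f, ← hu, ← hv, ← ha, ← hb, ← hc, hfg]
      ring
    have hCS : (b * v - c * u) ^ 2 ≤ a * (b * (b * s - u ^ 2)) := by
      have := cs f (b • x - u • g)
      simp only [dotProduct_sub, dotProduct_smul, sub_dotProduct,
        smul_dotProduct, smul_eq_mul, ← hu, ← hv, ← ha, ← hb, ← hc, hfg,
        dotProduct_comm x g, dotProduct_comm x f] at this
      calc (b * v - c * u) ^ 2 = (b * v - c * u) ^ 2 := rfl
        _ ≤ _ := by nlinarith [this]
    have hstar : star x = x := rfl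
    rw [hstar, Matrix.neg_mulVec, Matrix.add_mulVec, Matrix.smul_mulVec,
      Matrix.smul_mulVec, Matrix.one_mulVec, dotProduct_neg,
      dotProduct_add, dotProduct_smul, dotProduct_smul, hQ]
    simp only [smul_eq_mul, ← hu, ← hv, ← hs]
    have hc' : c ≠ 0 := ne_of_lt hc0
    have hb' : b ≠ 0 := ne_of_gt hb0
    have hne : c * b ≠ 0 := mul_ne_zero hc' hb'
    have hrw : a / c * s + (c * b)⁻¹ * (2 * c * u * v - a * u ^ 2 - b * v ^ 2) =
        (a * b * s + (2 * c * u * v - a * u ^ 2 - b * v ^ 2)) / (c * b) := by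
      field_simp
    rw [hrw, neg_nonneg]
    apply div_nonpos_of_nonneg_of_nonpos
    · nlinarith [hCS, sq_nonneg (c * u), hb0]
    · nlinarith [hc0, hb0]
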